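/- Let X^*, Y^* be simple filtered simplicial complexes with min(δ(X^*), δ(Y^*)) > r for some r ≥ 0, and suppose there is an (r/2)-interleaving (f, g) between them. Then g ∘ f = id_{X^*} and f ∘ g = id_{Y^*}; moreover the graph of f is a correspondence R with dis(R) ≤ max(deg(f), deg(g)), so 2 d_GH(X^*, Y^*) = d_I^F(X^*, Y^*). -/
import Mathlib
set_option linter.unusedSectionVars false


open Finset Function

noncomputable section
open scoped Classical

variable {V W U : Type} [Fintype V] [Fintype W] [Fintype U]

/-- A size function is monotone on nonempty subsets. -/
def Monot (D : Finset V → ℝ) : Prop :=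
  ∀ ⦃α β : Finset V⦄, α.Nonempty → α ⊆ β → D α ≤ D β

/-- `max 0 (sup over nonempty subsets of the vertex set of g)`. -/
def supSub (g : Finset V → ℝ) : ℝ :=
  ((Finset.univ : Finset V).powerset.filter Finset.Nonempty).fold max 0 g

/-- Degree of a morphism: least `r ≥ 0` with `D_Y (f α) ≤ D_X α + r` for all nonempty `α`. -/
def degF (DX : Finset V → ℝ) (DY : Finset W → ℝ) (f : V → W) : ℝ :=
  supSub fun α => DY (α.image f) - DX α

/-- Codegree: least `r ≥ 0` with `D_Y (f α ∪ g α) ≤ D_X α + r` for all nonempty `α`. -/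
def codegF (DX : Finset V → ℝ) (DY : Finset W → ℝ) (f g : V → W) : ℝ :=
  supSub fun α => DY (α.image f ∪ α.image g) - DX α

/-- `codeg^∞`: minimum over chains `f = F 0, …, F n = g` of the max codegree of
consecutive terms. -/
def codegInfF (DX : Finset V → ℝ) (DY : Finset W → ℝ) (f g : V → W) : ℝ :=
  sInf { c : ℝ | ∃ n : ℕ, 0 < n ∧ ∃ F : ℕ → V → W, F 0 = f ∧ F n = g ∧
    c = (Finset.range n).fold max 0 fun i => codegF DX DY (F i) (F (i + 1)) }

/-- `(f, g)` is an `ε`-interleaving between the filtered complexes given by `DX`, `DY`. -/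
def IsInterleaving (DX : Finset V → ℝ) (DY : Finset W → ℝ)
    (f : V → W) (g : W → V) (ε : ℝ) : Prop :=
  degF DX DY f ≤ ε ∧ degF DY DX g ≤ ε ∧
  codegInfF DX DX (g ∘ f) id ≤ 2 * ε ∧ codegInfF DY DY (f ∘ g) id ≤ 2 * ε

/-- The interleaving distance between filtered simplicial complexes. -/
def dIF (DX : Finset V → ℝ) (DY : Finset W → ℝ) : ℝ :=
  sInf { ε : ℝ | 0 ≤ ε ∧ ∃ f g, IsInterleaving DX DY f g ε }

/-- The vertex quasi-distance `δ_X(v,w)`. -/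
def vqd (D : Finset V → ℝ) (v w : V) : ℝ :=
  supSub fun α => D (insert w α) - D (insert v α)

/-- Distortion of a correspondence `R ⊆ V × W`, viewed as a tripod via the projections. -/
def corDis (DX : Finset V → ℝ) (DY : Finset W → ℝ) (R : Finset (V × W)) : ℝ :=
  (R.powerset.filter Finset.Nonempty).fold max 0 fun α =>
    |DX (α.image Prod.fst) - DY (α.image Prod.snd)|

/-- Gromov–Hausdorff distance (via correspondences). -/
def dGHcor (DX : Finset V → ℝ) (DY : Finset W → ℝ) : ℝ :=
  (1 / 2) * sInf { c : ℝ | ∃ R : Finset (V × W),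
    (∀ v : V, ∃ w, (v, w) ∈ R) ∧ (∀ w : W, ∃ v, (v, w) ∈ R) ∧ c = corDis DX DY R }

/-- Distortion of a tripod `(Z, p, q)`. -/
def trdis (DX : Finset V → ℝ) (DY : Finset W → ℝ) {Z : Type} [Fintype Z]
    (p : Z → V) (q : Z → W) : ℝ :=
  supSub fun α : Finset Z => |DX (α.image p) - DY (α.image q)|

/-- Gromov–Hausdorff distance between filtered simplicial complexes (via tripods). -/
def dGHtri (DX : Finset V → ℝ) (DY : Finset W → ℝ) : ℝ :=
  (1 / 2) * sInf { c : ℝ | ∃ (Z : Type) (_i : Fintype Z) (p : Z → V) (q : Z → W),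
    Surjective p ∧ Surjective q ∧ c = trdis DX DY p q }

/-- Diameter of a finite subset of a metric space. -/
def fdiam {M : Type} [MetricSpace M] (σ : Finset M) : ℝ :=
  (σ ×ˢ σ).fold max 0 fun p => dist p.1 p.2

/-- Metric distortion of a correspondence between metric spaces. -/
def metDis {M N : Type} [MetricSpace M] [MetricSpace N] (R : Finset (M × N)) : ℝ :=
  (R ×ˢ R).fold max 0 fun p => |dist p.1.1 p.2.1 - dist p.1.2 p.2.2|

/-- Gromov–Hausdorff distance between finite metric spaces. -/
def dGHmet (M N : Type) [MetricSpace M] [MetricSpace N] : ℝ :=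
  (1 / 2) * sInf { c : ℝ | ∃ R : Finset (M × N),
    (∀ x : M, ∃ y, (x, y) ∈ R) ∧ (∀ y : N, ∃ x, (x, y) ∈ R) ∧ c = metDis R }

-- helper lemmas


lemma le_supSub (g : Finset V → ℝ) {α : Finset V} (h : α.Nonempty) : g α ≤ supSub g :=
  (Finset.le_fold_max _).2 (Or.inr ⟨α, by simp [h], le_rfl⟩)

lemma supSub_nonneg (g : Finset V → ℝ) : 0 ≤ supSub g :=
  (Finset.le_fold_max _).2 (Or.inl le_rfl)

lemma supSub_le {g : Finset V → ℝ} {M : ℝ} (h0 : 0 ≤ M)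
    (h : ∀ α : Finset V, α.Nonempty → g α ≤ M) : supSub g ≤ M := by
  apply (Finset.fold_max_le _).2
  refine ⟨h0, fun α hα => ?_⟩
  simp only [Finset.mem_filter] at hα
  exact h α hα.2


lemma le_degF (DX : Finset V → ℝ) (DY : Finset W → ℝ) (f : V → W) {α : Finset V}
    (h : α.Nonempty) : DY (α.image f) - DX α ≤ degF DX DY f := by
  rw [degF]; exact le_supSub (fun α => DY (α.image f) - DX α) h

lemma degF_nonneg (DX : Finset V → ℝ) (DY : Finset W → ℝ) (f : V → W) :
    0 ≤ degF DX DY f := by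
  rw [degF]; exact supSub_nonneg _

lemma degF_le {DX : Finset V → ℝ} {DY : Finset W → ℝ} {f : V → W} {M : ℝ} (h0 : 0 ≤ M)
    (h : ∀ α : Finset V, α.Nonempty → DY (α.image f) - DX α ≤ M) : degF DX DY f ≤ M := by
  rw [degF]; exact supSub_le h0 h

lemma le_codegF (DX : Finset V → ℝ) (DY : Finset W → ℝ) (f g : V → W) {α : Finset V}
    (h : α.Nonempty) : DY (α.image f ∪ α.image g) - DX α ≤ codegF DX DY f g := by
  rw [codegF]; exact le_supSub (fun α => DY (α.image f ∪ α.image g) - DX α) h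

lemma codegF_nonneg (DX : Finset V → ℝ) (DY : Finset W → ℝ) (f g : V → W) :
    0 ≤ codegF DX DY f g := by
  rw [codegF]; exact supSub_nonneg _

lemma codegF_le {DX : Finset V → ℝ} {DY : Finset W → ℝ} {f g : V → W} {M : ℝ} (h0 : 0 ≤ M)
    (h : ∀ α : Finset V, α.Nonempty → DY (α.image f ∪ α.image g) - DX α ≤ M) :
    codegF DX DY f g ≤ M := by
  rw [codegF]; exact supSub_le h0 h

lemma vqd_le {D : Finset V → ℝ} {v w : V} {M : ℝ} (h0 : 0 ≤ M)
    (h : ∀ α : Finset V, α.Nonempty → D (insert w α) - D (insert v α) ≤ M) : vqd D v w ≤ M := by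
  rw [vqd]; exact supSub_le h0 h

lemma vqd_le_codegF_id (DX : Finset V → ℝ) (hX : Monot DX) (h : V → V) (v : V) :
    vqd DX v (h v) ≤ codegF DX DX h id := by
  apply vqd_le (codegF_nonneg _ _ _ _)
  intro α hα
  have hterm : DX ((insert v α).image h ∪ (insert v α).image id) - DX (insert v α)
      ≤ codegF DX DX h id := le_codegF _ _ _ _ (Finset.insert_nonempty _ _)
  have hsub : insert (h v) α ⊆ (insert v α).image h ∪ (insert v α).image id := by
    intro x hx
    rcases Finset.mem_insert.1 hx with rfl | hx
    · exact Finset.mem_union_left _ (Finset.mem_image_of_mem h (Finset.mem_insert_self _ _))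
    · apply Finset.mem_union_right
      simpa using Finset.mem_insert_of_mem hx
  have := hX (Finset.insert_nonempty _ _) hsub
  linarith

lemma codegInfF_bddBelow (DX : Finset V → ℝ) (DY : Finset W → ℝ) (f g : V → W) :
    BddBelow { c : ℝ | ∃ n : ℕ, 0 < n ∧ ∃ F : ℕ → V → W, F 0 = f ∧ F n = g ∧
      c = (Finset.range n).fold max 0 fun i => codegF DX DY (F i) (F (i + 1)) } := by
  refine ⟨0, fun x hx => ?_⟩
  obtain ⟨n, hn, F, h0, h1, rfl⟩ := hx
  exact (Finset.le_fold_max _).2 (Or.inl le_rfl)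

lemma codegInfF_set_nonempty (DX : Finset V → ℝ) (DY : Finset W → ℝ) (f g : V → W) :
    Set.Nonempty { c : ℝ | ∃ n : ℕ, 0 < n ∧ ∃ F : ℕ → V → W, F 0 = f ∧ F n = g ∧
      c = (Finset.range n).fold max 0 fun i => codegF DX DY (F i) (F (i + 1)) } :=
  ⟨_, 1, one_pos, (fun i => if i = 0 then f else g), by simp, by simp, rfl⟩

lemma codegInfF_le_max (DX : Finset V → ℝ) (DY : Finset W → ℝ) (f g : V → W) :
    codegInfF DX DY f g ≤ max (codegF DX DY f g) 0 := by
  apply csInf_le (codegInfF_bddBelow DX DY f g)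
  refine ⟨1, one_pos, (fun i => if i = 0 then f else g), by simp, by simp, ?_⟩
  rw [Finset.range_one, Finset.fold_singleton]
  simp

/-- Key lemma: a self-map with small `codeg^∞` to the identity is the identity. -/
lemma self_morph_id (DX : Finset V → ℝ) (hX : Monot DX) {r : ℝ}
    (hXs : ∀ v w : V, v ≠ w → r < vqd DX v w)
    (h : V → V) (hc : codegInfF DX DX h id ≤ r) : h = id := by
  by_contra hne
  obtain ⟨v0, hv0⟩ : ∃ v, h v ≠ v := by
    by_contra hall; push_neg at hall; exact hne (funext hall)
  set P : Finset (V × V) := Finset.univ.filter (fun p => p.1 ≠ p.2) with hP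
  have hPne : P.Nonempty := ⟨(v0, h v0), by rw [hP]; simp only [Finset.mem_filter, Finset.mem_univ, true_and]; exact fun h' => hv0 h'.symm⟩
  set δ : ℝ := P.inf' hPne (fun p => vqd DX p.1 p.2) with hδ
  have hrδ : r < δ := by
    rw [hδ, Finset.lt_inf'_iff]
    intro p hp
    exact hXs p.1 p.2 (by simpa [hP] using hp)
  have hS : ∀ c ∈ { c : ℝ | ∃ n : ℕ, 0 < n ∧ ∃ F : ℕ → V → V, F 0 = h ∧ F n = id ∧
      c = (Finset.range n).fold max 0 fun i => codegF DX DX (F i) (F (i + 1)) }, δ ≤ c := by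
    rintro c ⟨n, hn, F, hF0, hFn, rfl⟩
    by_cases hjex : ∃ j, j < n ∧ F j ≠ id ∧ F (j + 1) = id
    · obtain ⟨j, hj, hFj, hFj1⟩ := hjex
      obtain ⟨v, hv⟩ : ∃ v, F j v ≠ v := by
        by_contra hall; push_neg at hall; exact hFj (funext hall)
      have h1 : vqd DX v (F j v) ≤ codegF DX DX (F j) (F (j + 1)) := by
        rw [hFj1]; exact vqd_le_codegF_id DX hX (F j) v
      have h2 : δ ≤ vqd DX v (F j v) := by
        rw [hδ]
        refine Finset.inf'_le (b := (v, F j v)) (fun p : V × V => vqd DX p.1 p.2) ?_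
        rw [hP]
        simp only [Finset.mem_filter, Finset.mem_univ, true_and]
        exact fun h' => hv h'.symm
      have h3 : codegF DX DX (F j) (F (j + 1)) ≤
          (Finset.range n).fold max 0 fun i => codegF DX DX (F i) (F (i + 1)) :=
        (Finset.le_fold_max _).2 (Or.inr ⟨j, Finset.mem_range.2 hj, le_rfl⟩)
      linarith
    · exfalso
      push_neg at hjex
      have key : ∀ k, k ≤ n → F (n - k) = id := by
        intro k
        induction k with
        | zero => intro _; simpa using hFn
        | succ k ih =>
          intro hk
          have h1 := ih (by omega)
          have h2 : F (n - (k + 1) + 1) = id := by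
            rw [show n - (k + 1) + 1 = n - k by omega]; exact h1
          by_contra hne'
          exact hjex (n - (k + 1)) (by omega) hne' h2
      have := key n le_rfl
      simp only [Nat.sub_self] at this
      rw [hF0] at this
      exact hne this
  have hge : δ ≤ codegInfF DX DX h id :=
    le_csInf (codegInfF_set_nonempty DX DX h id) hS
  linarith

lemma graph_snd {f : V → W} {α : Finset (V × W)}
    (hsub : α ⊆ Finset.univ.image fun v => (v, f v)) :
    α.image Prod.snd = (α.image Prod.fst).image f := by
  rw [Finset.image_image]
  apply Finset.image_congr
  intro p hp
  have := hsub hp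
  simp only [Finset.mem_image, Finset.mem_univ, true_and] at this
  obtain ⟨v, hv⟩ := this
  simp [← hv]

lemma corDis_graph_le (DX : Finset V → ℝ) (DY : Finset W → ℝ)
    (f : V → W) (g : W → V) (hgf : g ∘ f = id) :
    corDis DX DY ((Finset.univ : Finset V).image fun v => (v, f v)) ≤
      max (degF DX DY f) (degF DY DX g) := by
  apply (Finset.fold_max_le _).2
  refine ⟨le_max_of_le_left (supSub_nonneg _), fun α hα => ?_⟩
  simp only [Finset.mem_filter, Finset.mem_powerset] at hα
  obtain ⟨hsub, hne⟩ := hα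
  have hAne : (α.image Prod.fst).Nonempty := hne.image _
  rw [graph_snd hsub, abs_sub_le_iff]
  constructor
  · have hback : ((α.image Prod.fst).image f).image g = α.image Prod.fst := by
      rw [Finset.image_image, hgf, Finset.image_id]
    have hterm : DX (((α.image Prod.fst).image f).image g) - DY ((α.image Prod.fst).image f)
        ≤ degF DY DX g := le_degF _ _ _ (hAne.image _)
    rw [hback] at hterm
    exact le_max_of_le_right (by linarith)
  · exact le_max_of_le_left (le_degF _ _ _ hAne)

lemma corDis_nonneg (DX : Finset V → ℝ) (DY : Finset W → ℝ) (R : Finset (V × W)) :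
    0 ≤ corDis DX DY R :=
  (Finset.le_fold_max _).2 (Or.inl le_rfl)

lemma corDis_term (DX : Finset V → ℝ) (DY : Finset W → ℝ) {R α : Finset (V × W)}
    (h1 : α ⊆ R) (h2 : α.Nonempty) :
    |DX (α.image Prod.fst) - DY (α.image Prod.snd)| ≤ corDis DX DY R :=
  (Finset.le_fold_max _).2 (Or.inr ⟨α, by simp [h1, h2], le_rfl⟩)

/-- From a correspondence, build an interleaving at its distortion. -/
lemma interleaving_of_cor (DX : Finset V → ℝ) (DY : Finset W → ℝ) (R : Finset (V × W))
    (hR1 : ∀ v, ∃ w, (v, w) ∈ R) (hR2 : ∀ w, ∃ v, (v, w) ∈ R) :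
    ∃ f g, IsInterleaving DX DY f g (corDis DX DY R) := by
  set c := corDis DX DY R with hc
  have hc0 : 0 ≤ c := corDis_nonneg DX DY R
  set f : V → W := fun v => (hR1 v).choose with hf
  set g : W → V := fun w => (hR2 w).choose with hg
  have hfR : ∀ v, (v, f v) ∈ R := fun v => (hR1 v).choose_spec
  have hgR : ∀ w, (g w, w) ∈ R := fun w => (hR2 w).choose_spec
  -- basic: for any A ⊆ V nonempty, |DX A - DY (A.image f)| ≤ c
  have keyf : ∀ A : Finset V, A.Nonempty → |DX A - DY (A.image f)| ≤ c := by
    intro A hA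
    have hsub : A.image (fun v => (v, f v)) ⊆ R := by
      intro p hp
      simp only [Finset.mem_image] at hp
      obtain ⟨v, _, rfl⟩ := hp
      exact hfR v
    have := corDis_term DX DY hsub (hA.image _)
    have e1 : (A.image fun v => (v, f v)).image Prod.fst = A := by
      rw [Finset.image_image]; simp [Function.comp_def]
    have e2 : (A.image fun v => (v, f v)).image Prod.snd = A.image f := by
      rw [Finset.image_image]; rfl
    rwa [e1, e2] at this
  have keyg : ∀ B : Finset W, B.Nonempty → |DX (B.image g) - DY B| ≤ c := by
    intro B hB
    have hsub : B.image (fun w => (g w, w)) ⊆ R := by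
      intro p hp
      simp only [Finset.mem_image] at hp
      obtain ⟨w, _, rfl⟩ := hp
      exact hgR w
    have := corDis_term DX DY hsub (hB.image _)
    have e1 : (B.image fun w => (g w, w)).image Prod.fst = B.image g := by
      rw [Finset.image_image]; rfl
    have e2 : (B.image fun w => (g w, w)).image Prod.snd = B := by
      rw [Finset.image_image]; simp [Function.comp_def]
    rwa [e1, e2] at this
  have hdegf : degF DX DY f ≤ c := by
    apply degF_le hc0
    intro A hA
    have := (abs_sub_le_iff.1 (keyf A hA)).2
    linarith
  have hdegg : degF DY DX g ≤ c := by
    apply degF_le hc0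
    intro B hB
    have := (abs_sub_le_iff.1 (keyg B hB)).1
    linarith
  have hcodeg1 : codegF DX DX (g ∘ f) id ≤ 2 * c := by
    apply codegF_le (by linarith)
    intro β hβ
    have hsub : β.image (fun v => (v, f v)) ∪ β.image (fun v => (g (f v), f v)) ⊆ R := by
      intro p hp
      rcases Finset.mem_union.1 hp with hp | hp <;> simp only [Finset.mem_image] at hp
      · obtain ⟨v, _, rfl⟩ := hp; exact hfR v
      · obtain ⟨v, _, rfl⟩ := hp; exact hgR (f v)
    have hNE : (β.image (fun v => (v, f v)) ∪ β.image (fun v => (g (f v), f v))).Nonempty :=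
      (hβ.image _).mono Finset.subset_union_left
    have t1 := corDis_term DX DY hsub hNE
    have e1 : (β.image (fun v => (v, f v)) ∪ β.image (fun v => (g (f v), f v))).image Prod.fst
        = β ∪ β.image (g ∘ f) := by
      rw [Finset.image_union, Finset.image_image, Finset.image_image]
      simp [Function.comp_def]
    have e2 : (β.image (fun v => (v, f v)) ∪ β.image (fun v => (g (f v), f v))).image Prod.snd
        = β.image f := by
      rw [Finset.image_union, Finset.image_image, Finset.image_image]
      simp [Function.comp_def]
    rw [e1, e2] at t1
    have t2 := keyf β hβ
    have h1 := (abs_sub_le_iff.1 t1).1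
    have h2 := (abs_sub_le_iff.1 t2).2
    have e3 : β.image (g ∘ f) ∪ β.image id = β ∪ β.image (g ∘ f) := by
      rw [Finset.image_id, Finset.union_comm]
    rw [e3]
    linarith
  have hcodeg2 : codegF DY DY (f ∘ g) id ≤ 2 * c := by
    apply codegF_le (by linarith)
    intro β hβ
    have hsub : β.image (fun w => (g w, w)) ∪ β.image (fun w => (g w, f (g w))) ⊆ R := by
      intro p hp
      rcases Finset.mem_union.1 hp with hp | hp <;> simp only [Finset.mem_image] at hp
      · obtain ⟨w, _, rfl⟩ := hp; exact hgR w
      · obtain ⟨w, _, rfl⟩ := hp; exact hfR (g w)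
    have hNE : (β.image (fun w => (g w, w)) ∪ β.image (fun w => (g w, f (g w)))).Nonempty :=
      (hβ.image _).mono Finset.subset_union_left
    have t1 := corDis_term DX DY hsub hNE
    have e1 : (β.image (fun w => (g w, w)) ∪ β.image (fun w => (g w, f (g w)))).image Prod.fst
        = β.image g := by
      rw [Finset.image_union, Finset.image_image, Finset.image_image]
      simp [Function.comp_def]
    have e2 : (β.image (fun w => (g w, w)) ∪ β.image (fun w => (g w, f (g w)))).image Prod.snd
        = β ∪ β.image (f ∘ g) := by
      rw [Finset.image_union, Finset.image_image, Finset.image_image]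
      simp [Function.comp_def]
    rw [e1, e2] at t1
    have t2 := keyg β hβ
    have h1 := (abs_sub_le_iff.1 t1).2
    have h2 := (abs_sub_le_iff.1 t2).1
    have e3 : β.image (f ∘ g) ∪ β.image id = β ∪ β.image (f ∘ g) := by
      rw [Finset.image_id, Finset.union_comm]
    rw [e3]
    linarith
  refine ⟨f, g, hdegf, hdegg, ?_, ?_⟩
  · exact le_trans (codegInfF_le_max DX DX (g ∘ f) id)
      (max_le hcodeg1 (by linarith))
  · exact le_trans (codegInfF_le_max DY DY (f ∘ g) id)
      (max_le hcodeg2 (by linarith))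

/-- Parts 1–3 bundled, for any (r/2)-interleaving. -/
lemma main123 [Nonempty V] [Nonempty W]
    (DX : Finset V → ℝ) (DY : Finset W → ℝ) (hX : Monot DX) (hY : Monot DY)
    (r : ℝ)
    (hXs : ∀ v w : V, v ≠ w → r < vqd DX v w)
    (hYs : ∀ v w : W, v ≠ w → r < vqd DY v w)
    (f : V → W) (g : W → V) (hint : IsInterleaving DX DY f g (r / 2)) :
    g ∘ f = id ∧ f ∘ g = id ∧
    corDis DX DY ((Finset.univ : Finset V).image fun v => (v, f v)) ≤
      max (degF DX DY f) (degF DY DX g) := by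
  obtain ⟨h1, h2, h3, h4⟩ := hint
  have hgf : g ∘ f = id := self_morph_id DX hX hXs _ (by linarith)
  have hfg : f ∘ g = id := self_morph_id DY hY hYs _ (by linarith)
  exact ⟨hgf, hfg, corDis_graph_le DX DY f g hgf⟩

/-- between simple filtered simplicial complexes with
`min(δ(X^*), δ(Y^*)) > r`, an `(r/2)`-interleaving `(f, g)` consists of mutually inverse
bijections, the graph of `f` is a correspondence of distortion at most
`max(deg f, deg g)`, and `2 d_GH = d_I^F`. -/
theorem stmt_18 [Nonempty V] [Nonempty W]
    (DX : Finset V → ℝ) (DY : Finset W → ℝ) (hX : Monot DX) (hY : Monot DY)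
    (r : ℝ) (hr : 0 ≤ r)
    (hXs : ∀ v w : V, v ≠ w → r < vqd DX v w)
    (hYs : ∀ v w : W, v ≠ w → r < vqd DY v w)
    (f : V → W) (g : W → V) (hint : IsInterleaving DX DY f g (r / 2)) :
    g ∘ f = id ∧ f ∘ g = id ∧
    corDis DX DY ((Finset.univ : Finset V).image fun v => (v, f v)) ≤
      max (degF DX DY f) (degF DY DX g) ∧
    2 * dGHcor DX DY = dIF DX DY := by
  obtain ⟨hgf, hfg, hcor⟩ := main123 DX DY hX hY r hXs hYs f g hint
  refine ⟨hgf, hfg, hcor, ?_⟩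
  set A := { c : ℝ | ∃ R : Finset (V × W),
    (∀ v : V, ∃ w, (v, w) ∈ R) ∧ (∀ w : W, ∃ v, (v, w) ∈ R) ∧ c = corDis DX DY R } with hA
  set B := { ε : ℝ | 0 ≤ ε ∧ ∃ f g, IsInterleaving DX DY f g ε } with hB
  have hAB : A ⊆ B := by
    rintro c ⟨R, h1, h2, rfl⟩
    exact ⟨corDis_nonneg DX DY R, interleaving_of_cor DX DY R h1 h2⟩
  have hcorr1 : ∀ v : V, ∃ w, (v, w) ∈ (Finset.univ : Finset V).image fun v => (v, f v) :=
    fun v => ⟨f v, Finset.mem_image_of_mem _ (Finset.mem_univ v)⟩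
  have hcorr2 : ∀ w : W, ∃ v, (v, w) ∈ (Finset.univ : Finset V).image fun v => (v, f v) := by
    intro w
    have hw : f (g w) = w := congrFun hfg w
    exact ⟨g w, Finset.mem_image.2 ⟨g w, Finset.mem_univ _, by rw [hw]⟩⟩
  have hAne : A.Nonempty := ⟨_, _, hcorr1, hcorr2, rfl⟩
  have hAbdd : BddBelow A := ⟨0, by rintro c ⟨R, _, _, rfl⟩; exact corDis_nonneg DX DY R⟩
  have hBne : B.Nonempty := ⟨r / 2, by linarith, f, g, hint⟩
  have key : sInf A = sInf B := by
    apply le_antisymm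
    · apply le_csInf hBne
      rintro ε ⟨hε0, f', g', hint'⟩
      by_cases hcase : ε ≤ r / 2
      · have hint'' : IsInterleaving DX DY f' g' (r / 2) :=
          ⟨hint'.1.trans hcase, hint'.2.1.trans hcase,
            hint'.2.2.1.trans (by linarith), hint'.2.2.2.trans (by linarith)⟩
        obtain ⟨hgf', hfg', hcor'⟩ := main123 DX DY hX hY r hXs hYs f' g' hint''
        have hc1 : ∀ v : V, ∃ w, (v, w) ∈ (Finset.univ : Finset V).image fun v => (v, f' v) :=
          fun v => ⟨f' v, Finset.mem_image_of_mem _ (Finset.mem_univ v)⟩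
        have hc2 : ∀ w : W, ∃ v, (v, w) ∈ (Finset.univ : Finset V).image fun v => (v, f' v) := by
          intro w
          have hw : f' (g' w) = w := congrFun hfg' w
          exact ⟨g' w, Finset.mem_image.2 ⟨g' w, Finset.mem_univ _, by rw [hw]⟩⟩
        have hmem : corDis DX DY ((Finset.univ : Finset V).image fun v => (v, f' v)) ∈ A :=
          ⟨_, hc1, hc2, rfl⟩
        calc sInf A ≤ _ := csInf_le hAbdd hmem
          _ ≤ max (degF DX DY f') (degF DY DX g') := hcor'
          _ ≤ ε := max_le hint'.1 hint'.2.1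
      · push_neg at hcase
        have hmem : corDis DX DY ((Finset.univ : Finset V).image fun v => (v, f v)) ∈ A :=
          ⟨_, hcorr1, hcorr2, rfl⟩
        calc sInf A ≤ _ := csInf_le hAbdd hmem
          _ ≤ max (degF DX DY f) (degF DY DX g) := hcor
          _ ≤ r / 2 := max_le hint.1 hint.2.1
          _ ≤ ε := le_of_lt hcase
    · exact csInf_le_csInf ⟨0, by rintro ε ⟨hε0, -⟩; exact hε0⟩ hAne hAB
  have e1 : dGHcor DX DY = (1 / 2) * sInf A := by rw [dGHcor, hA]
  have e2 : dIF DX DY = sInf B := by rw [dIF, hB]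
  rw [e1, e2, key]
  ring
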